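/- Let B ⊆ ℕ^Σ be a finite set of Parikh vectors. If B is not independent, then there exists a semilinear expression e such that (⋃_{b∈B} expr(b))* ≡ e and the dimension of e is strictly smaller than the cardinality of B. -/

import Mathlib

namespace CKAnote

/-- Commutative regular expressions over an alphabet `α`. -/
inductive CRE (α : Type) where
  | zero : CRE α
  | one : CRE α
  | letter : α → CRE α
  | mul : CRE α → CRE α → CRE α
  | union : CRE α → CRE α → CRE α
  | star : CRE α → CRE α

variable {α : Type} [Fintype α] [DecidableEq α]

/-- Semantics of a commutative regular expression as a set of Parikh vectors. -/
def sem : CRE α → Set (α → ℕ)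
  | .zero => ∅
  | .one => {0}
  | .letter a => {Pi.single a 1}
  | .mul e f => {w | ∃ u ∈ sem e, ∃ v ∈ sem f, w = u + v}
  | .union e f => sem e ∪ sem f
  | .star e => ↑(AddSubmonoid.closure (sem e))

/-- Provable equality: the smallest congruence containing the axioms of
commutative Kleene algebra (where `e ≤ f` abbreviates `e ∪ f ≡ f`). -/
inductive CKA : CRE α → CRE α → Prop
  | refl (e : CRE α) : CKA e e
  | symm {e f : CRE α} : CKA e f → CKA f e
  | trans {e f g : CRE α} : CKA e f → CKA f g → CKA e g
  | mul_congr {e e' f f' : CRE α} : CKA e e' → CKA f f' → CKA (e.mul f) (e'.mul f')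
  | union_congr {e e' f f' : CRE α} : CKA e e' → CKA f f' → CKA (e.union f) (e'.union f')
  | star_congr {e e' : CRE α} : CKA e e' → CKA e.star e'.star
  | mul_assoc (e f g : CRE α) : CKA (e.mul (f.mul g)) ((e.mul f).mul g)
  | mul_comm (e f : CRE α) : CKA (e.mul f) (f.mul e)
  | one_mul (e : CRE α) : CKA (CRE.one.mul e) e
  | union_assoc (e f g : CRE α) : CKA (e.union (f.union g)) ((e.union f).union g)
  | union_comm (e f : CRE α) : CKA (e.union f) (f.union e)
  | union_idem (e : CRE α) : CKA (e.union e) e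
  | zero_union (e : CRE α) : CKA (CRE.zero.union e) e
  | zero_mul (e : CRE α) : CKA (CRE.zero.mul e) CRE.zero
  | left_distrib (e f g : CRE α) : CKA (e.mul (f.union g)) ((e.mul f).union (e.mul g))
  | star_unfold (e : CRE α) : CKA ((CRE.one.union (e.mul e.star)).union e.star) e.star
  | star_lfp {e f : CRE α} : CKA ((e.mul f).union f) f → CKA ((e.star.mul f).union f) f

/-- `e ≤ f`, i.e. `e ∪ f ≡ f`. -/
def leq (e f : CRE α) : Prop := CKA (e.union f) f

/-- `e^n`, the `n`-fold product of `e` with itself. -/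
def pow (e : CRE α) : ℕ → CRE α
  | 0 => CRE.one
  | n + 1 => e.mul (pow e n)

/-- `e^{<n}`, i.e. `(e ∪ 1)^(n-1)` for `n > 0` and `0` for `n = 0`. -/
def ltPow (e : CRE α) : ℕ → CRE α
  | 0 => CRE.zero
  | n + 1 => pow (e.union CRE.one) n

/-- Finite union of a list of expressions. -/
def unionList : List (CRE α) → CRE α
  | [] => CRE.zero
  | e :: l => e.union (unionList l)

/-- Finite product of a list of expressions. -/
def prodList : List (CRE α) → CRE α
  | [] => CRE.one
  | e :: l => e.mul (prodList l)

/-- `expr(u)`: the product over `a ∈ α` of `u a` copies of the letter `a`. -/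
noncomputable def exprVec (u : α → ℕ) : CRE α :=
  prodList ((Finset.univ : Finset α).toList.map (fun a => pow (CRE.letter a) (u a)))

/-- The union `⋃_{b ∈ B} expr(b)` for a finite set of Parikh vectors `B`. -/
noncomputable def unionVecs (B : Finset (α → ℕ)) : CRE α :=
  unionList (B.toList.map exprVec)

/-- The linear expression `expr(u) · (⋃_{b ∈ B} expr(b))*`. -/
noncomputable def linExpr (u : α → ℕ) (B : Finset (α → ℕ)) : CRE α :=
  (exprVec u).mul (unionVecs B).star

/-- A finite set of Parikh vectors is independent when every Parikh vector
admits at most one representation as an `ℕ`-linear combination of its elements. -/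
def Independent (B : Finset (α → ℕ)) : Prop :=
  ∀ c d : (α → ℕ) → ℕ, (∑ b ∈ B, c b • b) = (∑ b ∈ B, d b • b) → ∀ b ∈ B, c b = d b

/-- The semilinear expression associated to a list of linear data:
the finite union of the corresponding linear expressions. -/
noncomputable def semiLin (L : List ((α → ℕ) × Finset (α → ℕ))) : CRE α :=
  unionList (L.map (fun p => linExpr p.1 p.2))

/-- The dimension of a semilinear expression: the maximum of the dimensions
of its linear components. -/
def dimSL (L : List ((α → ℕ) × Finset (α → ℕ))) : ℕ :=
  (L.map (fun p => p.2.card)).foldr max 0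

/-- Finitary (star-free) expressions. -/
def NoStar : CRE α → Prop
  | .zero => True
  | .one => True
  | .letter _ => True
  | .mul e f => NoStar e ∧ NoStar f
  | .union e f => NoStar e ∧ NoStar f
  | .star _ => False

/-- Coordinatewise embedding of `ℕ^α` into `ℚ^α`. -/
def toQ (v : α → ℕ) : α → ℚ := fun a => (v a : ℚ)

section Lemmas
set_option linter.unusedSectionVars false
omit [Fintype α] [DecidableEq α]

local infix:50 " ≋ " => CKA
local infix:50 " ≼ " => leq

instance : Trans (CKA (α := α)) (CKA (α := α)) (CKA (α := α)) := ⟨CKA.trans⟩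

theorem le_of_cka {e f : CRE α} (h : e ≋ f) : e ≼ f :=
  (CKA.union_congr h (CKA.refl f)).trans (CKA.union_idem f)

theorem leq.rfl {e : CRE α} : e ≼ e := CKA.union_idem e

theorem leq.trans {e f g : CRE α} (h1 : e ≼ f) (h2 : f ≼ g) : e ≼ g := by
  unfold leq at *
  calc e.union g ≋ e.union (f.union g) := CKA.union_congr (CKA.refl e) h2.symm
    _ ≋ (e.union f).union g := CKA.union_assoc e f g
    _ ≋ f.union g := CKA.union_congr h1 (CKA.refl g)
    _ ≋ g := h2

theorem leq_congr_left {e e' f : CRE α} (he : e ≋ e') (h : e ≼ f) : e' ≼ f :=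
  ((CKA.union_congr he.symm (CKA.refl f)).trans h : leq e' f)

theorem leq_congr_right {e f f' : CRE α} (hf : f ≋ f') (h : e ≼ f) : e ≼ f' :=
  (((CKA.union_congr (CKA.refl e) hf.symm).trans h).trans hf : leq e f')

instance : Trans (leq (α := α)) (leq (α := α)) (leq (α := α)) := ⟨leq.trans⟩
instance : Trans (CKA (α := α)) (leq (α := α)) (leq (α := α)) := ⟨fun h1 h2 => leq_congr_left h1.symm h2⟩
instance : Trans (leq (α := α)) (CKA (α := α)) (leq (α := α)) := ⟨fun h1 h2 => leq_congr_right h2 h1⟩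

theorem le_union_left (e f : CRE α) : e ≼ e.union f :=
  calc e.union (e.union f) ≋ (e.union e).union f := CKA.union_assoc _ _ _
    _ ≋ e.union f := CKA.union_congr (CKA.union_idem e) (CKA.refl f)

theorem le_union_right (e f : CRE α) : f ≼ e.union f :=
  calc f.union (e.union f) ≋ f.union (f.union e) := CKA.union_congr (CKA.refl f) (CKA.union_comm e f)
    _ ≋ (f.union f).union e := CKA.union_assoc _ _ _
    _ ≋ f.union e := CKA.union_congr (CKA.union_idem f) (CKA.refl e)
    _ ≋ e.union f := CKA.union_comm f e

theorem union_leq {e f g : CRE α} (h1 : e ≼ g) (h2 : f ≼ g) : (e.union f) ≼ g :=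
  calc (e.union f).union g ≋ e.union (f.union g) := (CKA.union_assoc e f g).symm
    _ ≋ e.union g := CKA.union_congr (CKA.refl e) h2
    _ ≋ g := h1

theorem leq_antisymm {e f : CRE α} (h1 : e ≼ f) (h2 : f ≼ e) : e ≋ f :=
  calc e ≋ f.union e := h2.symm
    _ ≋ e.union f := CKA.union_comm f e
    _ ≋ f := h1

theorem cka_mul_one (e : CRE α) : e.mul CRE.one ≋ e :=
  (CKA.mul_comm e CRE.one).trans (CKA.one_mul e)

theorem cka_right_distrib (e f g : CRE α) : (e.union f).mul g ≋ (e.mul g).union (f.mul g) :=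
  calc (e.union f).mul g ≋ g.mul (e.union f) := CKA.mul_comm _ _
    _ ≋ (g.mul e).union (g.mul f) := CKA.left_distrib g e f
    _ ≋ (e.mul g).union (f.mul g) := CKA.union_congr (CKA.mul_comm g e) (CKA.mul_comm g f)

theorem mul_leq_left {e e' : CRE α} (h : e ≼ e') (f : CRE α) : e.mul f ≼ e'.mul f :=
  calc (e.mul f).union (e'.mul f) ≋ (e.union e').mul f := (cka_right_distrib e e' f).symm
    _ ≋ e'.mul f := CKA.mul_congr h (CKA.refl f)

theorem mul_leq_right (e : CRE α) {f f' : CRE α} (h : f ≼ f') : e.mul f ≼ e.mul f' :=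
  calc (e.mul f).union (e.mul f') ≋ e.mul (f.union f') := (CKA.left_distrib e f f').symm
    _ ≋ e.mul f' := CKA.mul_congr (CKA.refl e) h

theorem mul_leq {e e' f f' : CRE α} (h1 : e ≼ e') (h2 : f ≼ f') : e.mul f ≼ e'.mul f' :=
  (mul_leq_left h1 f).trans (mul_leq_right e' h2)

theorem zero_leq (e : CRE α) : CRE.zero ≼ e := CKA.zero_union e

theorem cka_mul_zero (e : CRE α) : e.mul CRE.zero ≋ CRE.zero :=
  (CKA.mul_comm e CRE.zero).trans (CKA.zero_mul e)

theorem cka_mul_left_comm (a b c : CRE α) : a.mul (b.mul c) ≋ b.mul (a.mul c) :=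
  calc a.mul (b.mul c) ≋ (a.mul b).mul c := CKA.mul_assoc _ _ _
    _ ≋ (b.mul a).mul c := CKA.mul_congr (CKA.mul_comm a b) (CKA.refl c)
    _ ≋ b.mul (a.mul c) := (CKA.mul_assoc _ _ _).symm

theorem cka_mul_shuffle (a b x y : CRE α) : (a.mul b).mul (x.mul y) ≋ (a.mul x).mul (b.mul y) :=
  calc (a.mul b).mul (x.mul y) ≋ a.mul (b.mul (x.mul y)) := (CKA.mul_assoc _ _ _).symm
    _ ≋ a.mul (x.mul (b.mul y)) := CKA.mul_congr (CKA.refl a) (cka_mul_left_comm b x y)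
    _ ≋ (a.mul x).mul (b.mul y) := CKA.mul_assoc _ _ _

theorem star_fix_le (e : CRE α) : (CRE.one.union (e.mul e.star)) ≼ e.star := CKA.star_unfold e

theorem one_le_star (e : CRE α) : CRE.one ≼ e.star :=
  (le_union_left _ _).trans (star_fix_le e)

theorem mul_star_le (e : CRE α) : e.mul e.star ≼ e.star :=
  (le_union_right _ _).trans (star_fix_le e)

theorem le_star (e : CRE α) : e ≼ e.star :=
  calc e ≋ e.mul CRE.one := (cka_mul_one e).symm
    _ ≼ e.mul e.star := mul_leq_right e (one_le_star e)
    _ ≼ e.star := mul_star_le e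

theorem star_lfp' {e f g : CRE α} (h1 : e.mul f ≼ f) (h2 : g ≼ f) : e.star.mul g ≼ f :=
  calc e.star.mul g ≼ e.star.mul f := mul_leq_right _ h2
    _ ≼ f := CKA.star_lfp h1

theorem star_le {e f : CRE α} (h0 : CRE.one ≼ f) (h1 : e.mul f ≼ f) : e.star ≼ f :=
  calc e.star ≋ e.star.mul CRE.one := (cka_mul_one _).symm
    _ ≼ f := star_lfp' h1 h0

theorem star_mono {e f : CRE α} (h : e ≼ f) : e.star ≼ f.star :=
  star_le (one_le_star f) ((mul_leq_left h f.star).trans (mul_star_le f))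

theorem star_mul_star (e : CRE α) : e.star.mul e.star ≼ e.star :=
  star_lfp' (mul_star_le e) leq.rfl

theorem mul_le_star {x y e : CRE α} (hx : x ≼ e.star) (hy : y ≼ e.star) : x.mul y ≼ e.star :=
  (mul_leq hx hy).trans (star_mul_star e)

theorem star_fix (e : CRE α) : e.star ≋ CRE.one.union (e.mul e.star) := by
  refine leq_antisymm (star_le (le_union_left _ _) ?_) (star_fix_le e)
  calc e.mul (CRE.one.union (e.mul e.star))
      ≋ (e.mul CRE.one).union (e.mul (e.mul e.star)) := CKA.left_distrib _ _ _
    _ ≼ CRE.one.union (e.mul e.star) := by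
        refine union_leq ?_ ?_
        · calc e.mul CRE.one ≋ e := cka_mul_one e
            _ ≋ e.mul CRE.one := (cka_mul_one e).symm
            _ ≼ e.mul e.star := mul_leq_right e (one_le_star e)
            _ ≼ CRE.one.union (e.mul e.star) := le_union_right _ _
        · calc e.mul (e.mul e.star) ≼ e.mul e.star := mul_leq_right e (mul_star_le e)
            _ ≼ CRE.one.union (e.mul e.star) := le_union_right _ _

theorem star_union (e f : CRE α) : (e.union f).star ≋ e.star.mul f.star := by
  refine leq_antisymm ?_ ?_
  · refine star_le ?_ ?_
    · calc CRE.one ≋ CRE.one.mul CRE.one := (CKA.one_mul _).symm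
        _ ≼ e.star.mul f.star := mul_leq (one_le_star e) (one_le_star f)
    · calc (e.union f).mul (e.star.mul f.star)
          ≋ (e.mul (e.star.mul f.star)).union (f.mul (e.star.mul f.star)) := cka_right_distrib _ _ _
        _ ≼ e.star.mul f.star := by
            refine union_leq ?_ ?_
            · calc e.mul (e.star.mul f.star) ≋ (e.mul e.star).mul f.star := CKA.mul_assoc _ _ _
                _ ≼ e.star.mul f.star := mul_leq_left (mul_star_le e) _
            · calc f.mul (e.star.mul f.star) ≋ e.star.mul (f.mul f.star) := cka_mul_left_comm _ _ _
                _ ≼ e.star.mul f.star := mul_leq_right _ (mul_star_le f)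
  · calc e.star.mul f.star
        ≼ (e.union f).star.mul (e.union f).star :=
          mul_leq (star_mono (le_union_left e f)) (star_mono (le_union_right e f))
      _ ≼ (e.union f).star := star_mul_star _

theorem star_zero : (CRE.zero : CRE α).star ≋ CRE.one := by
  refine leq_antisymm (star_le leq.rfl ?_) (one_le_star _)
  calc CRE.zero.mul CRE.one ≋ CRE.zero := CKA.zero_mul _
    _ ≼ CRE.one := zero_leq _

theorem pow_le_star {e f : CRE α} (h : e ≼ f.star) : ∀ n, pow e n ≼ f.star
  | 0 => one_le_star f
  | n + 1 => (mul_leq h (pow_le_star h n)).trans (star_mul_star f)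

theorem cka_pow_add (e : CRE α) (m n : ℕ) : pow e (m + n) ≋ (pow e m).mul (pow e n) := by
  induction m with
  | zero => simpa [pow] using (CKA.one_mul (pow e n)).symm
  | succ m ih =>
      have : m + 1 + n = (m + n) + 1 := by omega
      rw [this]
      calc pow e (m + n + 1) ≋ e.mul (pow e (m+n)) := CKA.refl _
        _ ≋ e.mul ((pow e m).mul (pow e n)) := CKA.mul_congr (CKA.refl e) ih
        _ ≋ (e.mul (pow e m)).mul (pow e n) := CKA.mul_assoc _ _ _

theorem mem_le_unionList {x : CRE α} : ∀ {l : List (CRE α)}, x ∈ l → x ≼ unionList l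
  | e :: l, h => by
      rcases List.mem_cons.1 h with h | h
      · subst h; exact le_union_left _ _
      · exact (mem_le_unionList h).trans (le_union_right _ _)

theorem unionList_leq {f : CRE α} : ∀ {l : List (CRE α)}, (∀ x ∈ l, x ≼ f) → unionList l ≼ f
  | [], _ => zero_leq f
  | e :: l, h => union_leq (h e (by simp)) (unionList_leq fun x hx => h x (by simp [hx]))

theorem unionList_mul_leq {f g : CRE α} : ∀ {l : List (CRE α)},
    (∀ x ∈ l, x.mul g ≼ f) → (unionList l).mul g ≼ f
  | [], _ => leq_congr_left (CKA.zero_mul g).symm (zero_leq f)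
  | e :: l, h => by
      refine leq_congr_left (cka_right_distrib e (unionList l) g).symm ?_
      exact union_leq (h e (by simp)) (unionList_mul_leq fun x hx => h x (by simp [hx]))

theorem mul_unionList_leq {f g : CRE α} {l : List (CRE α)}
    (h : ∀ x ∈ l, g.mul x ≼ f) : g.mul (unionList l) ≼ f := by
  refine leq_congr_left (CKA.mul_comm (unionList l) g) ?_
  exact unionList_mul_leq fun x hx => leq_congr_left (CKA.mul_comm g x) (h x hx)

theorem cka_unionList_append : ∀ (l1 l2 : List (CRE α)),
    unionList (l1 ++ l2) ≋ (unionList l1).union (unionList l2)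
  | [], l2 => (CKA.zero_union _).symm
  | e :: l1, l2 => by
      calc unionList (e :: l1 ++ l2) ≋ e.union (unionList (l1 ++ l2)) := CKA.refl _
        _ ≋ e.union ((unionList l1).union (unionList l2)) :=
            CKA.union_congr (CKA.refl e) (cka_unionList_append l1 l2)
        _ ≋ (e.union (unionList l1)).union (unionList l2) := CKA.union_assoc _ _ _

theorem cka_prodList_append : ∀ (l1 l2 : List (CRE α)),
    prodList (l1 ++ l2) ≋ (prodList l1).mul (prodList l2)
  | [], l2 => (CKA.one_mul _).symm
  | e :: l1, l2 => by
      calc prodList (e :: l1 ++ l2) ≋ e.mul (prodList (l1 ++ l2)) := CKA.refl _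
        _ ≋ e.mul ((prodList l1).mul (prodList l2)) :=
            CKA.mul_congr (CKA.refl e) (cka_prodList_append l1 l2)
        _ ≋ (e.mul (prodList l1)).mul (prodList l2) := CKA.mul_assoc _ _ _

theorem cka_prodList_perm {l l' : List (CRE α)} (h : l.Perm l') : prodList l ≋ prodList l' := by
  induction h with
  | nil => exact CKA.refl _
  | cons x _ ih => exact CKA.mul_congr (CKA.refl x) ih
  | swap x y l => exact cka_mul_left_comm y x (prodList l)
  | trans _ _ ih1 ih2 => exact ih1.trans ih2

theorem prodList_le_star {e : CRE α} : ∀ {l : List (CRE α)},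
    (∀ x ∈ l, x ≼ e.star) → prodList l ≼ e.star
  | [], _ => one_le_star e
  | x :: l, h =>
      mul_le_star (h x (by simp)) (prodList_le_star fun y hy => h y (by simp [hy]))

theorem cka_prodList_map_congr {β : Type*} {f g : β → CRE α} : ∀ {l : List β},
    (∀ a ∈ l, f a ≋ g a) → prodList (l.map f) ≋ prodList (l.map g)
  | [], _ => CKA.refl _
  | a :: l, h =>
      CKA.mul_congr (h a (by simp)) (cka_prodList_map_congr fun x hx => h x (by simp [hx]))

theorem cka_prodList_map_one {β : Type*} : ∀ (l : List β),
    prodList (l.map fun _ => (CRE.one : CRE α)) ≋ CRE.one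
  | [] => CKA.refl _
  | a :: l => (CKA.mul_congr (CKA.refl _) (cka_prodList_map_one l)).trans (CKA.one_mul _)

theorem cka_prodList_map_mul {β : Type*} {f g : β → CRE α} : ∀ (l : List β),
    prodList (l.map fun a => (f a).mul (g a)) ≋ (prodList (l.map f)).mul (prodList (l.map g))
  | [] => (CKA.one_mul _).symm
  | a :: l => by
      calc prodList ((a :: l).map fun a => (f a).mul (g a))
          ≋ ((f a).mul (g a)).mul (prodList (l.map fun a => (f a).mul (g a))) := CKA.refl _
        _ ≋ ((f a).mul (g a)).mul ((prodList (l.map f)).mul (prodList (l.map g))) :=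
            CKA.mul_congr (CKA.refl _) (cka_prodList_map_mul l)
        _ ≋ ((f a).mul (prodList (l.map f))).mul ((g a).mul (prodList (l.map g))) :=
            cka_mul_shuffle _ _ _ _

theorem cka_unionList_star : ∀ (l : List (CRE α)),
    (unionList l).star ≋ prodList (l.map CRE.star)
  | [] => star_zero
  | e :: l => by
      calc (unionList (e :: l)).star ≋ (e.union (unionList l)).star := CKA.refl _
        _ ≋ e.star.mul (unionList l).star := star_union _ _
        _ ≋ e.star.mul (prodList (l.map CRE.star)) :=
            CKA.mul_congr (CKA.refl _) (cka_unionList_star l)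

theorem cka_star_split (e : CRE α) : ∀ (n : ℕ),
    e.star ≋ (unionList ((List.range n).map (pow e))).union ((pow e n).mul e.star)
  | 0 => by
      simp only [List.range_zero, List.map_nil]
      calc e.star ≋ CRE.one.mul e.star := (CKA.one_mul _).symm
        _ ≋ CRE.zero.union (CRE.one.mul e.star) := (CKA.zero_union _).symm
  | n + 1 => by
      have key : (pow e n).mul e.star ≋ (pow e n).union ((pow e (n+1)).mul e.star) :=
        calc (pow e n).mul e.star
            ≋ (pow e n).mul (CRE.one.union (e.mul e.star)) :=
              CKA.mul_congr (CKA.refl _) (star_fix e)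
          _ ≋ ((pow e n).mul CRE.one).union ((pow e n).mul (e.mul e.star)) := CKA.left_distrib _ _ _
          _ ≋ (pow e n).union ((pow e (n+1)).mul e.star) := by
              refine CKA.union_congr (cka_mul_one _) ?_
              calc (pow e n).mul (e.mul e.star) ≋ e.mul ((pow e n).mul e.star) :=
                    cka_mul_left_comm _ _ _
                _ ≋ (e.mul (pow e n)).mul e.star := CKA.mul_assoc _ _ _
      calc e.star ≋ (unionList ((List.range n).map (pow e))).union ((pow e n).mul e.star) :=
            cka_star_split e n
        _ ≋ (unionList ((List.range n).map (pow e))).union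
              ((pow e n).union ((pow e (n+1)).mul e.star)) := CKA.union_congr (CKA.refl _) key
        _ ≋ ((unionList ((List.range n).map (pow e))).union (pow e n)).union
              ((pow e (n+1)).mul e.star) := CKA.union_assoc _ _ _
        _ ≋ (unionList ((List.range (n+1)).map (pow e))).union ((pow e (n+1)).mul e.star) := by
            refine CKA.union_congr ?_ (CKA.refl _)
            rw [List.range_succ, List.map_append]
            refine CKA.trans ?_ (cka_unionList_append _ _).symm
            refine CKA.union_congr (CKA.refl _) ?_
            exact ((CKA.union_comm _ _).trans (CKA.zero_union _)).symm
end Lemmas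

section Lemmas2
set_option linter.unusedSectionVars false

local infix:50 " ≋ " => CKA
local infix:50 " ≼ " => leq

theorem exprVec_zero : exprVec (0 : α → ℕ) ≋ CRE.one := by
  unfold exprVec
  refine CKA.trans ?_ (cka_prodList_map_one (Finset.univ : Finset α).toList)
  exact cka_prodList_map_congr (fun a _ => CKA.refl CRE.one)

theorem exprVec_add (u v : α → ℕ) : exprVec (u + v) ≋ (exprVec u).mul (exprVec v) := by
  unfold exprVec
  refine CKA.trans (cka_prodList_map_congr
    (g := fun a => (pow (CRE.letter a) (u a)).mul (pow (CRE.letter a) (v a)))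
    (fun a _ => cka_pow_add (CRE.letter a) (u a) (v a))) ?_
  exact cka_prodList_map_mul _

theorem exprVec_smul (n : ℕ) (u : α → ℕ) : exprVec (n • u) ≋ pow (exprVec u) n := by
  induction n with
  | zero => rw [zero_smul]; exact exprVec_zero
  | succ n ih =>
      rw [succ_nsmul, add_comm]
      exact (exprVec_add u (n • u)).trans (CKA.mul_congr (CKA.refl _) ih)

theorem exprVec_le_unionVecs {b : α → ℕ} {F : Finset (α → ℕ)} (h : b ∈ F) :
    exprVec b ≼ unionVecs F :=
  mem_le_unionList (List.mem_map_of_mem (Finset.mem_toList.2 h))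

theorem unionVecs_mono {F G : Finset (α → ℕ)} (h : ∀ b ∈ F, b ∈ G) :
    unionVecs F ≼ unionVecs G := by
  refine unionList_leq fun x hx => ?_
  rcases List.mem_map.1 hx with ⟨b, hb, rfl⟩
  exact exprVec_le_unionVecs (h b (Finset.mem_toList.1 hb))

theorem exprVec_smul_le_star {b : α → ℕ} {F : Finset (α → ℕ)} (h : b ∈ F) (n : ℕ) :
    exprVec (n • b) ≼ (unionVecs F).star :=
  leq_congr_left (exprVec_smul n b).symm
    (pow_le_star ((exprVec_le_unionVecs h).trans (le_star _)) n)

theorem exprVec_sum_le_star {F G : Finset (α → ℕ)} (m : (α → ℕ) → ℕ)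
    (h : ∀ b ∈ F, m b ≠ 0 → b ∈ G) :
    exprVec (∑ b ∈ F, m b • b) ≼ (unionVecs G).star := by
  induction F using Finset.induction_on with
  | empty =>
      rw [Finset.sum_empty]
      exact leq_congr_left exprVec_zero.symm (one_le_star _)
  | @insert a F ha ih =>
      rw [Finset.sum_insert ha]
      refine leq_congr_left (exprVec_add _ _).symm ?_
      refine mul_le_star ?_ (ih fun b hb => h b (Finset.mem_insert_of_mem hb))
      by_cases hm : m a = 0
      · rw [hm, zero_smul]
        exact leq_congr_left exprVec_zero.symm (one_le_star _)
      · exact exprVec_smul_le_star (h a (Finset.mem_insert_self a F) hm) _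

theorem star_unionVecs_prod (F : Finset (α → ℕ)) :
    (unionVecs F).star ≋ prodList (F.toList.map fun b => (exprVec b).star) := by
  unfold unionVecs
  refine (cka_unionList_star _).trans ?_
  rw [List.map_map]
  exact CKA.refl _

theorem prodList_map_star_le {G : Finset (α → ℕ)} {l : List (α → ℕ)}
    (h : ∀ b ∈ l, b ∈ G) :
    prodList (l.map fun b => (exprVec b).star) ≼ (unionVecs G).star := by
  refine prodList_le_star fun x hx => ?_
  rcases List.mem_map.1 hx with ⟨b, hb, rfl⟩
  exact star_mono (exprVec_le_unionVecs (h b hb))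
theorem star_le_of_comp {f : CRE α} {G : Finset (α → ℕ)} {x : α → ℕ}
    (h : leq (linExpr ((0 : ℕ) • x) G) f) : leq (unionVecs G).star f := by
  refine leq_congr_left ?_ h
  unfold linExpr
  refine CKA.trans (CKA.mul_congr ?_ (CKA.refl _)) (CKA.one_mul _)
  rw [zero_smul]
  exact exprVec_zero

theorem Klem (B : Finset (α → ℕ)) (c d : (α → ℕ) → ℕ)
    (hsum : (∑ b ∈ B, c b • b) = (∑ b ∈ B, d b • b))
    (S : Finset (α → ℕ)) (hS : ∀ b, b ∈ S ↔ b ∈ B ∧ 0 < c b)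
    (hdisj : ∀ b ∈ B, c b = 0 ∨ d b = 0)
    (f : CRE α)
    (hcomp : ∀ x ∈ S, ∀ j < c x, leq (linExpr (j • x) (B.erase x)) f)
    (b1 : α → ℕ) (hb1 : b1 ∈ S) :
    ∀ (l : List (α → ℕ)), l.Nodup → (∀ b ∈ l, b ∈ S) → b1 ∉ l →
    ∀ (g : CRE α), (∀ x ∈ l, leq g ((unionVecs (B.erase x)).star)) →
      leq g ((unionVecs (B.erase b1)).star) →
      leq ((exprVec (∑ b ∈ S \ l.toFinset, c b • b)).mul
        ((prodList (l.map fun b => (exprVec b).star)).mul g)) f := by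
  intro l
  induction l with
  | nil =>
      intro _ _ _ g _ hg1
      have hSsum : (∑ b ∈ S \ (List.toFinset ([] : List (α → ℕ))), c b • b)
          = ∑ b ∈ B, d b • b := by
        rw [List.toFinset_nil, Finset.sdiff_empty, ← hsum]
        refine Finset.sum_subset (fun b hb => ((hS b).1 hb).1) (fun b hb hbs => ?_)
        have : c b = 0 := by
          by_contra hc
          exact hbs ((hS b).2 ⟨hb, Nat.pos_of_ne_zero hc⟩)
        rw [this, zero_smul]
      rw [hSsum]
      have hd : leq (exprVec (∑ b ∈ B, d b • b)) ((unionVecs (B.erase b1)).star) := by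
        refine exprVec_sum_le_star d (fun b hb hdb => Finset.mem_erase.2 ⟨?_, hb⟩)
        rintro rfl
        have hcb1 : 0 < c b := ((hS b).1 hb1).2
        rcases hdisj b hb with hc | hd
        · omega
        · exact hdb hd
      have hstarf : leq ((unionVecs (B.erase b1)).star) f :=
        star_le_of_comp (hcomp b1 hb1 0 ((hS b1).1 hb1).2)
      refine leq.trans ?_ hstarf
      refine mul_le_star hd ?_
      exact leq_congr_left (CKA.one_mul g).symm hg1
  | cons a rest ih =>
      intro hnd hl hb1l g hg2 hg1
      have ha : a ∈ S := hl a (by simp)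
      have haB : a ∈ B := ((hS a).1 ha).1
      have harest : a ∉ rest := (List.nodup_cons.1 hnd).1
      have hndr : rest.Nodup := (List.nodup_cons.1 hnd).2
      have hab1 : a ≠ b1 := fun h => hb1l (h ▸ (List.mem_cons_self : a ∈ a :: rest))
      set E : CRE α := exprVec a with hE
      set P : CRE α := prodList (rest.map fun b => (exprVec b).star) with hP
      set w : α → ℕ := ∑ b ∈ S \ (a :: rest).toFinset, c b • b with hw
      set Q : CRE α := (exprVec w).mul (P.mul g) with hQ
      -- the term rearranged
      have step1 : ((exprVec w).mul
          ((prodList ((a :: rest).map fun b => (exprVec b).star)).mul g)) ≋ E.star.mul Q := by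
        calc (exprVec w).mul ((E.star.mul P).mul g)
            ≋ (exprVec w).mul (E.star.mul (P.mul g)) :=
              CKA.mul_congr (CKA.refl _) (CKA.mul_assoc _ _ _).symm
          _ ≋ E.star.mul ((exprVec w).mul (P.mul g)) := cka_mul_left_comm _ _ _
      have hQstar : leq Q ((unionVecs (B.erase a)).star) := by
        refine mul_le_star ?_ (mul_le_star ?_ (hg2 a (by simp)))
        · refine exprVec_sum_le_star c (fun b hb _ => Finset.mem_erase.2 ⟨?_, ?_⟩)
          · rcases Finset.mem_sdiff.1 hb with ⟨hbS, hbl⟩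
            rintro rfl
            exact hbl (by simp)
          · exact ((hS b).1 (Finset.mem_sdiff.1 hb).1).1
        · refine prodList_map_star_le (fun b hb => Finset.mem_erase.2 ⟨?_, ((hS b).1 (hl b (by simp [hb]))).1⟩)
          rintro rfl
          exact harest hb
      refine leq_congr_left step1.symm ?_
      have hsplit : E.star ≋ (unionList ((List.range (c a)).map (pow E))).union
          ((pow E (c a)).mul E.star) := cka_star_split E (c a)
      refine leq_congr_left (CKA.mul_congr hsplit.symm (CKA.refl Q)) ?_
      refine leq_congr_left (cka_right_distrib _ _ _).symm ?_
      refine union_leq ?_ ?_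
      · -- small powers: land in a component
        refine unionList_mul_leq (fun x hx => ?_)
        rcases List.mem_map.1 hx with ⟨j, hj, rfl⟩
        have hjn : j < c a := List.mem_range.1 hj
        calc (pow E j).mul Q ≋ (exprVec (j • a)).mul Q :=
              CKA.mul_congr (exprVec_smul j a).symm (CKA.refl Q)
          _ ≼ (exprVec (j • a)).mul ((unionVecs (B.erase a)).star) := mul_leq_right _ hQstar
          _ ≼ f := hcomp a ha j hjn
      · -- full power: recurse
        have hset : S \ rest.toFinset = insert a (S \ (a :: rest).toFinset) := by
          ext x
          by_cases hxa : x = a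
          · subst hxa
            simp [ha, harest]
          · simp [hxa]
        have hw2 : (∑ b ∈ S \ rest.toFinset, c b • b) = c a • a + w := by
          rw [hset, Finset.sum_insert (by simp)]
        have hEB : ∀ x ∈ S, a ≠ x → leq E.star ((unionVecs (B.erase x)).star) := by
          intro x _ hax
          exact star_mono (exprVec_le_unionVecs (Finset.mem_erase.2 ⟨hax, haB⟩))
        have ihres := ih hndr (fun b hb => hl b (by simp [hb])) (fun h => hb1l (by simp [h]))
          (E.star.mul g)
          (fun x hx => mul_le_star (hEB x (hl x (by simp [hx]))
              (fun h => harest (h ▸ hx))) (hg2 x (by simp [hx])))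
          (mul_le_star (hEB b1 hb1 hab1) hg1)
        refine leq_congr_left ?_ ihres
        rw [hw2]
        calc (exprVec (c a • a + w)).mul (P.mul (E.star.mul g))
            ≋ ((exprVec (c a • a)).mul (exprVec w)).mul (P.mul (E.star.mul g)) :=
              CKA.mul_congr (exprVec_add _ _) (CKA.refl _)
          _ ≋ ((exprVec (c a • a)).mul (exprVec w)).mul (E.star.mul (P.mul g)) :=
              CKA.mul_congr (CKA.refl _) (cka_mul_left_comm _ _ _)
          _ ≋ ((exprVec (c a • a)).mul E.star).mul ((exprVec w).mul (P.mul g)) :=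
              cka_mul_shuffle _ _ _ _
          _ ≋ ((pow E (c a)).mul E.star).mul Q :=
              CKA.mul_congr (CKA.mul_congr (exprVec_smul (c a) a) (CKA.refl _)) (CKA.refl _)
theorem foldr_max_lt {n : ℕ} : ∀ {l : List ℕ}, 0 < n → (∀ x ∈ l, x < n) →
    l.foldr max 0 < n
  | [], h0, _ => h0
  | x :: l, h0, h => by
      simp only [List.foldr_cons]
      exact Nat.max_lt.2 ⟨h x (by simp), foldr_max_lt h0 (fun y hy => h y (by simp [hy]))⟩

theorem main_aux (B : Finset (α → ℕ)) (c d : (α → ℕ) → ℕ)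
    (hsum : (∑ b ∈ B, c b • b) = (∑ b ∈ B, d b • b))
    (hdisj : ∀ b ∈ B, c b = 0 ∨ d b = 0)
    (b0 : α → ℕ) (hb0 : b0 ∈ B) (hc0 : 0 < c b0) :
    ∃ L : List ((α → ℕ) × Finset (α → ℕ)),
      CKA (unionVecs B).star (semiLin L) ∧ dimSL L < B.card := by
  classical
  set S : Finset (α → ℕ) := B.filter (fun b => 0 < c b) with hSdef
  have hS : ∀ b, b ∈ S ↔ b ∈ B ∧ 0 < c b := by
    intro b; simp [hSdef]
  have hb0S : b0 ∈ S := (hS b0).2 ⟨hb0, hc0⟩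
  set L : List ((α → ℕ) × Finset (α → ℕ)) :=
    S.toList.flatMap (fun x => (List.range (c x)).map fun j => ((j • x : α → ℕ), B.erase x))
    with hLdef
  have hmemL : ∀ x ∈ S, ∀ j < c x, ((j • x : α → ℕ), B.erase x) ∈ L := by
    intro x hx j hj
    exact List.mem_flatMap.2 ⟨x, Finset.mem_toList.2 hx,
      List.mem_map.2 ⟨j, List.mem_range.2 hj, rfl⟩⟩
  have hLshape : ∀ p ∈ L, ∃ x ∈ S, ∃ j < c x, p = ((j • x : α → ℕ), B.erase x) := by
    intro p hp
    rcases List.mem_flatMap.1 hp with ⟨x, hx, hpx⟩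
    rcases List.mem_map.1 hpx with ⟨j, hj, rfl⟩
    exact ⟨x, Finset.mem_toList.1 hx, j, List.mem_range.1 hj, rfl⟩
  set f : CRE α := semiLin L with hfdef
  have hcomp : ∀ x ∈ S, ∀ j < c x, leq (linExpr (j • x) (B.erase x)) f := by
    intro x hx j hj
    exact mem_le_unionList (List.mem_map_of_mem (hmemL x hx j hj))
  have herase_le : ∀ x : α → ℕ, leq ((unionVecs (B.erase x)).star) ((unionVecs B).star) :=
    fun x => star_mono (unionVecs_mono (fun b hb => Finset.mem_of_mem_erase hb))
  refine ⟨L, leq_antisymm ?_ ?_, ?_⟩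
  · -- B* ≤ f
    refine star_le ?_ ?_
    · exact (one_le_star _).trans (star_le_of_comp (hcomp b0 hb0S 0 hc0))
    · refine unionList_mul_leq (fun x hx => ?_)
      rcases List.mem_map.1 hx with ⟨b, hbl, rfl⟩
      have hb : b ∈ B := Finset.mem_toList.1 hbl
      refine mul_unionList_leq (fun y hy => ?_)
      rcases List.mem_map.1 hy with ⟨p, hp, rfl⟩
      rcases hLshape p hp with ⟨x0, hx0, j, hj, rfl⟩
      simp only [linExpr]
      by_cases hbx : b = x0
      · subst hbx
        by_cases hjc : j + 1 < c b
        · -- becomes the (j+1) component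
          have hvec : b + j • b = ((j + 1) : ℕ) • b := by
            rw [succ_nsmul, add_comm]
          calc (exprVec b).mul ((exprVec (j • b)).mul ((unionVecs (B.erase b)).star))
              ≋ ((exprVec b).mul (exprVec (j • b))).mul ((unionVecs (B.erase b)).star) :=
                CKA.mul_assoc _ _ _
            _ ≋ (exprVec ((j+1) • b)).mul ((unionVecs (B.erase b)).star) := by
                refine CKA.mul_congr ?_ (CKA.refl _)
                rw [← hvec]
                exact (exprVec_add _ _).symm
            _ ≼ f := hcomp b hx0 (j+1) hjc
        · -- j + 1 = c b : the crux, use Klem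
          have hjc' : j + 1 = c b := by omega
          set l : List (α → ℕ) := (S.erase b).toList with hldef
          set diff : Finset (α → ℕ) := (B.erase b) \ (S.erase b) with hdiffdef
          set g : CRE α := prodList (diff.toList.map fun b => (exprVec b).star) with hgdef
          have hsub : S.erase b ⊆ B.erase b := by
            intro y hy
            rcases Finset.mem_erase.1 hy with ⟨hyb, hyS⟩
            exact Finset.mem_erase.2 ⟨hyb, ((hS y).1 hyS).1⟩
          have hdiffmem : ∀ y ∈ diff.toList, y ∈ B ∧ y ∉ S ∧ y ≠ b := by
            intro y hy
            rcases Finset.mem_sdiff.1 (Finset.mem_toList.1 hy) with ⟨hy1, hy2⟩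
            rcases Finset.mem_erase.1 hy1 with ⟨hyb, hyB⟩
            refine ⟨hyB, fun hyS => hy2 (Finset.mem_erase.2 ⟨hyb, hyS⟩), hyb⟩
          have hperm : (l ++ diff.toList).Perm (B.erase b).toList := by
            rw [← Multiset.coe_eq_coe]
            have hcoe : ((l ++ diff.toList : List (α → ℕ)) : Multiset (α → ℕ))
                = ((l : List (α → ℕ)) : Multiset (α → ℕ)) + (diff.toList : Multiset (α → ℕ)) := rfl
            rw [hcoe, hldef, Finset.coe_toList, Finset.coe_toList, Finset.coe_toList,
              hdiffdef, Finset.sdiff_val]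
            exact add_tsub_cancel_of_le (Finset.val_le_iff.2 hsub)
          have hstar_decomp : ((unionVecs (B.erase b)).star) ≋
              (prodList (l.map fun y => (exprVec y).star)).mul g := by
            refine (star_unionVecs_prod (B.erase b)).trans ?_
            refine CKA.trans (cka_prodList_perm ((hperm.map _).symm)) ?_
            rw [List.map_append]
            exact cka_prodList_append _ _
          have hsum_single : (∑ y ∈ S \ l.toFinset, c y • y) = c b • b := by
            have hls : l.toFinset = S.erase b := by
              rw [hldef, Finset.toList_toFinset]
            have hsd : S \ S.erase b = {b} := by
              ext y
              by_cases hyb : y = b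
              · subst hyb
                simp [hx0]
              · simp [hyb]
            rw [hls, hsd, Finset.sum_singleton]
          have hKres := Klem B c d hsum S hS hdisj f hcomp b hx0 l
            (Finset.nodup_toList _)
            (fun y hy => (Finset.mem_erase.1 (Finset.mem_toList.1 hy)).2)
            (fun hbl => (Finset.mem_erase.1 (Finset.mem_toList.1 hbl)).1 rfl)
            g
            (fun x hx => prodList_map_star_le (fun y hy => by
              rcases hdiffmem y hy with ⟨hyB, hyS, _⟩
              refine Finset.mem_erase.2 ⟨?_, hyB⟩
              rintro rfl
              exact hyS ((Finset.mem_erase.1 (Finset.mem_toList.1 hx)).2)))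
            (prodList_map_star_le (fun y hy => by
              rcases hdiffmem y hy with ⟨hyB, _, hyb⟩
              exact Finset.mem_erase.2 ⟨hyb, hyB⟩))
          rw [hsum_single] at hKres
          have hvec2 : b + j • b = c b • b := by
            rw [← hjc', succ_nsmul, add_comm]
          have hchain : ((exprVec b).mul ((exprVec (j • b)).mul ((unionVecs (B.erase b)).star)))
              ≋ (exprVec (c b • b)).mul ((prodList (l.map fun y => (exprVec y).star)).mul g) :=
            calc (exprVec b).mul ((exprVec (j • b)).mul ((unionVecs (B.erase b)).star))
                ≋ ((exprVec b).mul (exprVec (j • b))).mul ((unionVecs (B.erase b)).star) :=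
                  CKA.mul_assoc _ _ _
              _ ≋ (exprVec (c b • b)).mul ((unionVecs (B.erase b)).star) := by
                  refine CKA.mul_congr ?_ (CKA.refl _)
                  rw [← hvec2]
                  exact (exprVec_add _ _).symm
              _ ≋ (exprVec (c b • b)).mul ((prodList (l.map fun y => (exprVec y).star)).mul g) :=
                  CKA.mul_congr (CKA.refl _) hstar_decomp
          exact leq_congr_left hchain.symm hKres
      · -- b ≠ x0 : absorb into the star
        have hbR : leq (exprVec b) ((unionVecs (B.erase x0)).star) :=
          (exprVec_le_unionVecs (Finset.mem_erase.2 ⟨hbx, hb⟩)).trans (le_star _)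
        calc (exprVec b).mul ((exprVec (j • x0)).mul ((unionVecs (B.erase x0)).star))
            ≋ (exprVec (j • x0)).mul ((exprVec b).mul ((unionVecs (B.erase x0)).star)) :=
              cka_mul_left_comm _ _ _
          _ ≼ (exprVec (j • x0)).mul ((unionVecs (B.erase x0)).star) :=
              mul_leq_right _ (mul_le_star hbR leq.rfl)
          _ ≼ f := hcomp x0 hx0 j hj
  · -- f ≤ B*
    refine unionList_leq (fun y hy => ?_)
    rcases List.mem_map.1 hy with ⟨p, hp, rfl⟩
    rcases hLshape p hp with ⟨x0, hx0, j, hj, rfl⟩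
    simp only [linExpr]
    exact mul_le_star (exprVec_smul_le_star ((hS x0).1 hx0).1 j) (herase_le x0)
  · -- dimension bound
    have hpos : 0 < B.card := Finset.card_pos.2 ⟨b0, hb0⟩
    refine foldr_max_lt hpos (fun x hx => ?_)
    rcases List.mem_map.1 hx with ⟨p, hp, rfl⟩
    rcases hLshape p hp with ⟨x0, hx0, j, hj, rfl⟩
    simp only []
    rw [Finset.card_erase_of_mem ((hS x0).1 hx0).1]
    omega
end Lemmas2

/-- If `B` is not independent, then `(⋃_{b∈B} expr(b))*` is provably equal to a
semilinear expression of dimension strictly smaller than `|B|`. -/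
theorem dep_inf_dim (B : Finset (α → ℕ)) (h : ¬ Independent B) :
    ∃ L : List ((α → ℕ) × Finset (α → ℕ)),
      CKA (unionVecs B).star (semiLin L) ∧ dimSL L < B.card := by
  unfold Independent at h
  push_neg at h
  obtain ⟨c, d, hsum, b, hb, hne⟩ := h
  set c' : (α → ℕ) → ℕ := fun x => c x - min (c x) (d x) with hc'
  set d' : (α → ℕ) → ℕ := fun x => d x - min (c x) (d x) with hd'
  clear_value c' d'
  have hsum' : (∑ x ∈ B, c' x • x) = ∑ x ∈ B, d' x • x := by
    funext a
    have h1 := congrFun hsum a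
    simp only [Finset.sum_apply, Pi.smul_apply, smul_eq_mul] at h1 ⊢
    have hc2 : (∑ x ∈ B, c' x * x a) + (∑ x ∈ B, min (c x) (d x) * x a)
        = ∑ x ∈ B, c x * x a := by
      rw [← Finset.sum_add_distrib]
      refine Finset.sum_congr rfl (fun x _ => ?_)
      simp only [hc']
      rw [← add_mul, Nat.sub_add_cancel (min_le_left _ _)]
    have hd2 : (∑ x ∈ B, d' x * x a) + (∑ x ∈ B, min (c x) (d x) * x a)
        = ∑ x ∈ B, d x * x a := by
      rw [← Finset.sum_add_distrib]
      refine Finset.sum_congr rfl (fun x _ => ?_)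
      simp only [hd']
      rw [← add_mul, Nat.sub_add_cancel (min_le_right _ _)]
    exact Nat.add_right_cancel (hc2.trans (h1.trans hd2.symm))
  have hdisj : ∀ x ∈ B, c' x = 0 ∨ d' x = 0 := by
    intro x _
    simp only [hc', hd']
    omega
  have hne' : c' b ≠ d' b := by
    simp only [hc', hd']
    omega
  by_cases h0 : 0 < c' b
  · exact main_aux B c' d' hsum' hdisj b hb h0
  · refine main_aux B d' c' hsum'.symm (fun x hx => (hdisj x hx).symm) b hb ?_
    omega
end CKAnote
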